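/- Let γ > 0, σ > 0 and μ, a ∈ ℝ. Set μ_A = μ − √5·σ²/γ, μ_B = μ + √5·σ²/γ, e10 = 1 − √5·a/γ + 5a²/(3γ²), e11 = √5/γ − 10a/(3γ²), e12 = 5/(3γ²), e20 = 1 + √5·a/γ + 5a²/(3γ²), e21 = √5/γ + 10a/(3γ²), e22 = 5/(3γ²). Then ∫_ℝ (1 + √5·|w−a|/γ + 5(w−a)²/(3γ²)) · exp(−√5·|w−a|/γ) · φ_{μ,σ}(w) dw = exp((5σ² + 2√5·γ(a−μ))/(2γ²)) · ((e10 + e11·μ_A + e12·(μ_A² + σ²)) · Φ((μ_A − a)/σ) + (e11 + e12·(μ_A + a)) · (σ/√(2π)) · exp(−(a−μ_A)²/(2σ²))) + exp((5σ² − 2√5·γ(a−μ))/(2γ²)) · ((e20 − e21·μ_B + e22·(μ_B² + σ²)) · Φ((a − μ_B)/σ) + (e21 + e22·(−μ_B − a)) · (σ/√(2π)) · exp(−(a−μ_B)²/(2σ²))). -/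

import Mathlib

open MeasureTheory Real

/-- Standard normal cumulative distribution function. -/
noncomputable def Phi (t : ℝ) : ℝ :=
  ∫ u in Set.Iic t, (Real.sqrt (2 * Real.pi))⁻¹ * Real.exp (-u ^ 2 / 2)

/-- Normal density with mean μ and standard deviation σ. -/
noncomputable def normalPDF (μ σ x : ℝ) : ℝ :=
  (σ * Real.sqrt (2 * Real.pi))⁻¹ * Real.exp (-(x - μ) ^ 2 / (2 * σ ^ 2))

open Filter Set

lemma integrable_stdGauss : Integrable (fun u : ℝ => (Real.sqrt (2 * Real.pi))⁻¹ * Real.exp (-u ^ 2 / 2)) := by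
  have h : (fun u : ℝ => (Real.sqrt (2 * Real.pi))⁻¹ * Real.exp (-u ^ 2 / 2))
      = fun u : ℝ => (Real.sqrt (2 * Real.pi))⁻¹ * Real.exp (-(1/2 : ℝ) * u ^ 2) := by
    funext u; congr 1; ring_nf
  rw [h]
  exact (integrable_exp_neg_mul_sq (by norm_num : (0:ℝ) < 1/2)).const_mul _

lemma continuous_stdGauss : Continuous (fun u : ℝ => (Real.sqrt (2 * Real.pi))⁻¹ * Real.exp (-u ^ 2 / 2)) := by
  fun_prop

lemma hasDerivAt_Phi (t : ℝ) :
    HasDerivAt Phi ((Real.sqrt (2 * Real.pi))⁻¹ * Real.exp (-t ^ 2 / 2)) t := by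
  set g := fun u : ℝ => (Real.sqrt (2 * Real.pi))⁻¹ * Real.exp (-u ^ 2 / 2) with hg
  have hPhi : Phi = fun t => Phi 0 + ∫ u in (0:ℝ)..t, g u := by
    funext s
    have := intervalIntegral.integral_Iic_sub_Iic
      (integrable_stdGauss.integrableOn (s := Set.Iic 0))
      (integrable_stdGauss.integrableOn (s := Set.Iic s))
    rw [Phi, Phi]
    rw [← this]; ring
  rw [hPhi]
  have h := intervalIntegral.integral_hasDerivAt_right
    (a := 0) (b := t) (integrable_stdGauss.intervalIntegrable)
    (continuous_stdGauss.stronglyMeasurable.stronglyMeasurableAtFilter)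
    continuous_stdGauss.continuousAt
  exact h.const_add _

lemma tendsto_Phi_atBot : Tendsto Phi atBot (nhds 0) := by
  set g := fun u : ℝ => (Real.sqrt (2 * Real.pi))⁻¹ * Real.exp (-u ^ 2 / 2) with hg
  have h0 : Phi = fun t => ∫ u, Set.indicator (Set.Iic t) g u := by
    funext t; rw [Phi, ← integral_indicator measurableSet_Iic]
  rw [h0]
  have : Tendsto (fun t : ℝ => ∫ u, Set.indicator (Set.Iic t) g u) atBot (nhds (∫ _ : ℝ, (0:ℝ))) := by
    apply tendsto_integral_filter_of_dominated_convergence (fun u => g u)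
    · filter_upwards with t
      exact (integrable_stdGauss.indicator measurableSet_Iic).aestronglyMeasurable
    · filter_upwards with t
      filter_upwards with u
      refine (norm_indicator_le_norm_self _ _).trans ?_
      rw [Real.norm_eq_abs, abs_of_nonneg (by positivity)]
    · exact integrable_stdGauss
    · filter_upwards with u
      apply Tendsto.congr' _ tendsto_const_nhds
      filter_upwards [eventually_le_atBot (u - 1)] with t ht
      rw [Set.indicator_of_notMem]
      simp only [Set.mem_Iic]; linarith
  simpa using this

lemma normalPDF_nonneg (m σ x : ℝ) (hσ : 0 < σ) : 0 ≤ normalPDF m σ x := by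
  unfold normalPDF
  have : 0 < Real.sqrt (2 * Real.pi) := Real.sqrt_pos.2 (by positivity)
  positivity

lemma normalPDF_eq (m σ : ℝ) (hσ : 0 < σ) :
    normalPDF m σ = fun x => (σ * Real.sqrt (2 * Real.pi))⁻¹ * Real.exp (-((2 * σ ^ 2)⁻¹) * (x - m) ^ 2) := by
  funext x; unfold normalPDF; congr 1; field_simp

lemma integrable_sq_mul_exp_neg_mul_sq {b : ℝ} (hb : 0 < b) :
    Integrable fun x : ℝ => x ^ 2 * Real.exp (-b * x ^ 2) := by
  have key : ∀ t : ℝ, 0 ≤ t → t * Real.exp (-t) ≤ 1 := by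
    intro t ht
    have h1 : t ≤ Real.exp t := le_trans (by linarith) (Real.add_one_le_exp t)
    rw [Real.exp_neg, ← div_eq_mul_inv, div_le_one (Real.exp_pos t)]
    exact h1
  apply Integrable.mono' (((integrable_exp_neg_mul_sq (by positivity : (0:ℝ) < b/2)).const_mul (2/b)))
  · apply Continuous.aestronglyMeasurable; fun_prop
  · filter_upwards with x
    have hE : Real.exp (-b * x ^ 2) = Real.exp (-(b/2) * x ^ 2) * Real.exp (-(b/2) * x ^ 2) := by
      rw [← Real.exp_add]; congr 1; ring
    have hk := key ((b/2) * x ^ 2) (by positivity)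
    have hE2 : Real.exp (-((b/2) * x^2)) = Real.exp (-(b/2) * x^2) := by congr 1; ring
    rw [hE2] at hk
    have hpos := Real.exp_pos (-(b/2) * x ^ 2)
    rw [Real.norm_eq_abs, abs_of_nonneg (by positivity), hE]
    have h2 := mul_le_mul_of_nonneg_right hk hpos.le
    calc x ^ 2 * (Real.exp (-(b/2) * x ^ 2) * Real.exp (-(b/2) * x ^ 2))
        = 2 / b * (b / 2 * x ^ 2 * Real.exp (-(b/2) * x ^ 2) * Real.exp (-(b/2) * x ^ 2)) := by
          field_simp
      _ ≤ 2 / b * (1 * Real.exp (-(b/2) * x ^ 2)) := by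
          apply mul_le_mul_of_nonneg_left _ (by positivity)
          calc b / 2 * x ^ 2 * Real.exp (-(b/2) * x ^ 2) * Real.exp (-(b/2) * x ^ 2)
              = b / 2 * x ^ 2 * Real.exp (-(b/2) * x ^ 2) * Real.exp (-(b/2) * x ^ 2) := rfl
            _ ≤ 1 * Real.exp (-(b/2) * x ^ 2) := h2
      _ = 2 / b * Real.exp (-(b/2) * x ^ 2) := by ring

lemma integrable_p0 (m σ : ℝ) (hσ : 0 < σ) : Integrable (normalPDF m σ) := by
  rw [normalPDF_eq m σ hσ]
  exact ((integrable_exp_neg_mul_sq (by positivity)).comp_sub_right m).const_mul _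

lemma integrable_p1 (m σ : ℝ) (hσ : 0 < σ) :
    Integrable (fun w => (w - m) * normalPDF m σ w) := by
  rw [normalPDF_eq m σ hσ]
  have h : (fun w => (w - m) * ((σ * Real.sqrt (2 * Real.pi))⁻¹ * Real.exp (-((2 * σ ^ 2)⁻¹) * (w - m) ^ 2)))
      = fun w => (fun x => (σ * Real.sqrt (2 * Real.pi))⁻¹ * (x * Real.exp (-((2 * σ ^ 2)⁻¹) * x ^ 2))) (w - m) := by
    funext w; ring
  rw [h]
  exact (((integrable_mul_exp_neg_mul_sq (by positivity)).const_mul _).comp_sub_right m)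

lemma integrable_p2 (m σ : ℝ) (hσ : 0 < σ) :
    Integrable (fun w => (w - m) ^ 2 * normalPDF m σ w) := by
  rw [normalPDF_eq m σ hσ]
  have h : (fun w => (w - m) ^ 2 * ((σ * Real.sqrt (2 * Real.pi))⁻¹ * Real.exp (-((2 * σ ^ 2)⁻¹) * (w - m) ^ 2)))
      = fun w => (fun x => (σ * Real.sqrt (2 * Real.pi))⁻¹ * (x ^ 2 * Real.exp (-((2 * σ ^ 2)⁻¹) * x ^ 2))) (w - m) := by
    funext w; ring
  rw [h]
  exact (((integrable_sq_mul_exp_neg_mul_sq (by positivity)).const_mul _).comp_sub_right m)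

lemma integrable_poly (m σ : ℝ) (hσ : 0 < σ) (p q r : ℝ) :
    Integrable (fun w => (p + q * w + r * w ^ 2) * normalPDF m σ w) := by
  have h : (fun w => (p + q * w + r * w ^ 2) * normalPDF m σ w)
      = fun w => (p + q * m + r * m ^ 2) * normalPDF m σ w
          + ((q + 2 * r * m) * ((w - m) * normalPDF m σ w) + r * ((w - m) ^ 2 * normalPDF m σ w)) := by
    funext w; ring
  rw [h]
  exact ((integrable_p0 m σ hσ).const_mul _).add
    (((integrable_p1 m σ hσ).const_mul _).add ((integrable_p2 m σ hσ).const_mul _))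

lemma hasDerivAt_normalPDF (m σ : ℝ) (hσ : 0 < σ) (x : ℝ) :
    HasDerivAt (normalPDF m σ) (-(x - m) / σ ^ 2 * normalPDF m σ x) x := by
  have hg : HasDerivAt (fun w : ℝ => -(w - m) ^ 2 / (2 * σ ^ 2))
      (-(2 * (x - m) ^ 1 * 1) / (2 * σ ^ 2)) x := by
    exact ((((hasDerivAt_id x).sub_const m).pow 2).neg).div_const _
  have h := ((hg.exp).const_mul ((σ * Real.sqrt (2 * Real.pi))⁻¹))
  have heq : (σ * Real.sqrt (2 * Real.pi))⁻¹ *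
      (Real.exp (-(x - m) ^ 2 / (2 * σ ^ 2)) * (-(2 * (x - m) ^ 1 * 1) / (2 * σ ^ 2)))
      = -(x - m) / σ ^ 2 * normalPDF m σ x := by
    unfold normalPDF; field_simp
  rw [heq] at h
  exact h

lemma tendsto_gauss_lin_atTop {b : ℝ} (hb : 0 < b) (c₀ c₁ : ℝ) :
    Tendsto (fun x : ℝ => (c₀ + c₁ * x) * Real.exp (-b * x ^ 2)) atTop (nhds 0) := by
  have hexp : Tendsto (fun x : ℝ => Real.exp (-(1/2) * x)) atTop (nhds 0) := by
    have : Tendsto (fun x : ℝ => -(1/2) * x) atTop atBot := by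
      apply Tendsto.const_mul_atTop_of_neg (by norm_num) tendsto_id
    exact Real.tendsto_exp_atBot.comp this
  have h0 : Tendsto (fun x : ℝ => Real.exp (-b * x ^ 2)) atTop (nhds 0) := by
    have := (exp_neg_mul_sq_isLittleO_exp_neg hb).isBigO.trans_tendsto ?_
    · exact this
    · have : Tendsto (fun x : ℝ => -x) atTop atBot := tendsto_neg_atTop_atBot
      exact Real.tendsto_exp_atBot.comp this
  have h1 : Tendsto (fun x : ℝ => x * Real.exp (-b * x ^ 2)) atTop (nhds 0) := by
    have hlo := (rpow_mul_exp_neg_mul_sq_isLittleO_exp_neg hb 1).isBigO.trans_tendsto hexp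
    apply hlo.congr'
    filter_upwards with x
    rw [Real.rpow_one]
  have := ((h0.const_mul c₀).add ((h1.const_mul c₁)))
  simp only [mul_zero, add_zero] at this
  apply this.congr
  intro x; ring
lemma continuous_normalPDF (m σ : ℝ) : Continuous (normalPDF m σ) := by
  unfold normalPDF; fun_prop

lemma tendsto_gauss_lin_atBot {b : ℝ} (hb : 0 < b) (c₀ c₁ : ℝ) :
    Tendsto (fun x : ℝ => (c₀ + c₁ * x) * Real.exp (-b * x ^ 2)) atBot (nhds 0) := by
  have h := (tendsto_gauss_lin_atTop hb c₀ (-c₁)).comp tendsto_neg_atBot_atTop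
  apply h.congr
  intro x
  simp only [Function.comp_apply]
  rw [neg_sq]
  ring_nf

lemma tendsto_lin_normalPDF_atTop (m σ : ℝ) (hσ : 0 < σ) (c₀ c₁ : ℝ) :
    Tendsto (fun w => (c₀ + c₁ * w) * normalPDF m σ w) atTop (nhds 0) := by
  have hb : (0:ℝ) < (2 * σ ^ 2)⁻¹ := by positivity
  have h := ((tendsto_gauss_lin_atTop hb (c₀ + c₁ * m) c₁).mul_const
    ((σ * Real.sqrt (2 * Real.pi))⁻¹)).comp
    (tendsto_atTop_add_const_right atTop (-m) tendsto_id)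
  rw [zero_mul] at h
  apply h.congr
  intro w
  simp only [Function.comp_apply, id_eq]
  rw [normalPDF_eq m σ hσ]
  have : w + -m = w - m := by ring
  rw [this]
  ring

lemma tendsto_lin_normalPDF_atBot (m σ : ℝ) (hσ : 0 < σ) (c₀ c₁ : ℝ) :
    Tendsto (fun w => (c₀ + c₁ * w) * normalPDF m σ w) atBot (nhds 0) := by
  have hb : (0:ℝ) < (2 * σ ^ 2)⁻¹ := by positivity
  have h := ((tendsto_gauss_lin_atBot hb (c₀ + c₁ * m) c₁).mul_const
    ((σ * Real.sqrt (2 * Real.pi))⁻¹)).comp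
    (tendsto_atBot_add_const_right atBot (-m) tendsto_id)
  rw [zero_mul] at h
  apply h.congr
  intro w
  simp only [Function.comp_apply, id_eq]
  rw [normalPDF_eq m σ hσ]
  have : w + -m = w - m := by ring
  rw [this]
  ring

lemma hasDerivAt_Phi_comp (m σ : ℝ) (hσ : 0 < σ) (x : ℝ) :
    HasDerivAt (fun w => Phi ((w - m) / σ)) (normalPDF m σ x) x := by
  have hin : HasDerivAt (fun w : ℝ => (w - m) / σ) (1 / σ) x := by
    simpa using ((hasDerivAt_id x).sub_const m).div_const σ
  have h := (hasDerivAt_Phi ((x - m) / σ)).comp x hin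
  have heq : (Real.sqrt (2 * Real.pi))⁻¹ * Real.exp (-((x - m) / σ) ^ 2 / 2) * (1 / σ)
      = normalPDF m σ x := by
    unfold normalPDF
    rw [div_pow]
    have h2 : -((x - m) ^ 2 / σ ^ 2) / 2 = -(x - m) ^ 2 / (2 * σ ^ 2) := by ring
    rw [h2]
    field_simp
  rw [heq] at h
  exact h

lemma hasDerivAt_Phi_comp_neg (m σ : ℝ) (hσ : 0 < σ) (x : ℝ) :
    HasDerivAt (fun w => Phi ((m - w) / σ)) (-normalPDF m σ x) x := by
  have hin : HasDerivAt (fun w : ℝ => (m - w) / σ) (-(1 / σ)) x := by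
    have := ((hasDerivAt_id x).const_sub m).div_const σ
    exact this.congr_deriv (by ring)
  have h := (hasDerivAt_Phi ((m - x) / σ)).comp x hin
  have heq : (Real.sqrt (2 * Real.pi))⁻¹ * Real.exp (-((m - x) / σ) ^ 2 / 2) * (-(1 / σ))
      = -normalPDF m σ x := by
    unfold normalPDF
    rw [div_pow]
    have h2 : -((m - x) ^ 2 / σ ^ 2) / 2 = -(x - m) ^ 2 / (2 * σ ^ 2) := by ring
    rw [h2]
    field_simp
  rw [heq] at h
  exact h

lemma key_Iic (m σ : ℝ) (hσ : 0 < σ) (p q r b : ℝ) :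
    ∫ w in Set.Iic b, (p + q * w + r * w ^ 2) * normalPDF m σ w
      = (p + q * m + r * (m ^ 2 + σ ^ 2)) * Phi ((b - m) / σ)
        - (q + r * (b + m)) * (σ ^ 2 * normalPDF m σ b) := by
  set A := p + q * m + r * (m ^ 2 + σ ^ 2) with hA
  set F := fun w => A * Phi ((w - m) / σ) - (q + r * (w + m)) * (σ ^ 2 * normalPDF m σ w) with hF
  have hderiv : ∀ x ∈ Set.Iic b, HasDerivAt F ((p + q * x + r * x ^ 2) * normalPDF m σ x) x := by
    intro x _
    have h1 : HasDerivAt (fun w : ℝ => q + r * (w + m)) r x := by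
      simpa using (((hasDerivAt_id x).add_const m).const_mul r).const_add q
    have h2 : HasDerivAt (fun w => σ ^ 2 * normalPDF m σ w)
        (σ ^ 2 * (-(x - m) / σ ^ 2 * normalPDF m σ x)) x :=
      (hasDerivAt_normalPDF m σ hσ x).const_mul _
    have h3 := ((hasDerivAt_Phi_comp m σ hσ x).const_mul A).sub (h1.mul h2)
    refine h3.congr_deriv ?_
    have hσ2 : σ ^ 2 ≠ 0 := by positivity
    field_simp
    ring
  have hbot : Tendsto F atBot (nhds 0) := by
    have hPhi : Tendsto (fun w => A * Phi ((w - m) / σ)) atBot (nhds 0) := by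
      have hin : Tendsto (fun w : ℝ => (w - m) / σ) atBot atBot := by
        apply Tendsto.atBot_div_const hσ
        exact tendsto_atBot_add_const_right atBot (-m) tendsto_id |>.congr (by intro x; simp only [id_eq]; ring)
      have := (tendsto_Phi_atBot.comp hin).const_mul A
      simpa using this
    have hlin : Tendsto (fun w => (q + r * (w + m)) * (σ ^ 2 * normalPDF m σ w)) atBot (nhds 0) := by
      have := tendsto_lin_normalPDF_atBot m σ hσ ((q + r * m) * σ ^ 2) (r * σ ^ 2)
      apply this.congr
      intro w; ring
    simpa using hPhi.sub hlin
  have hint : IntegrableOn (fun x => (p + q * x + r * x ^ 2) * normalPDF m σ x) (Set.Iic b) :=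
    (integrable_poly m σ hσ p q r).integrableOn
  have := integral_Iic_of_hasDerivAt_of_tendsto' hderiv hint hbot
  rw [this, hF, hA]
  ring

lemma key_Ioi (m σ : ℝ) (hσ : 0 < σ) (p q r b : ℝ) :
    ∫ w in Set.Ioi b, (p + q * w + r * w ^ 2) * normalPDF m σ w
      = (p + q * m + r * (m ^ 2 + σ ^ 2)) * Phi ((m - b) / σ)
        + (q + r * (b + m)) * (σ ^ 2 * normalPDF m σ b) := by
  set A := p + q * m + r * (m ^ 2 + σ ^ 2) with hA
  set G := fun w => -(A * Phi ((m - w) / σ)) - (q + r * (w + m)) * (σ ^ 2 * normalPDF m σ w) with hG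
  have hderiv : ∀ x ∈ Set.Ici b, HasDerivAt G ((p + q * x + r * x ^ 2) * normalPDF m σ x) x := by
    intro x _
    have h1 : HasDerivAt (fun w : ℝ => q + r * (w + m)) r x := by
      simpa using (((hasDerivAt_id x).add_const m).const_mul r).const_add q
    have h2 : HasDerivAt (fun w => σ ^ 2 * normalPDF m σ w)
        (σ ^ 2 * (-(x - m) / σ ^ 2 * normalPDF m σ x)) x :=
      (hasDerivAt_normalPDF m σ hσ x).const_mul _
    have h3 := (((hasDerivAt_Phi_comp_neg m σ hσ x).const_mul A).neg).sub (h1.mul h2)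
    refine h3.congr_deriv ?_
    have hσ2 : σ ^ 2 ≠ 0 := by positivity
    field_simp
    ring
  have htop : Tendsto G atTop (nhds 0) := by
    have hPhi : Tendsto (fun w => -(A * Phi ((m - w) / σ))) atTop (nhds 0) := by
      have hin : Tendsto (fun w : ℝ => (m - w) / σ) atTop atBot := by
        apply Tendsto.atBot_div_const hσ
        exact tendsto_atBot_add_const_right atTop m tendsto_neg_atTop_atBot |>.congr (by intro x; ring)
      have := ((tendsto_Phi_atBot.comp hin).const_mul A).neg
      simpa using this
    have hlin : Tendsto (fun w => (q + r * (w + m)) * (σ ^ 2 * normalPDF m σ w)) atTop (nhds 0) := by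
      have := tendsto_lin_normalPDF_atTop m σ hσ ((q + r * m) * σ ^ 2) (r * σ ^ 2)
      apply this.congr
      intro w; ring
    simpa using hPhi.sub hlin
  have hint : IntegrableOn (fun x => (p + q * x + r * x ^ 2) * normalPDF m σ x) (Set.Ioi b) :=
    (integrable_poly m σ hσ p q r).integrableOn
  have := integral_Ioi_of_hasDerivAt_of_tendsto' hderiv hint htop
  rw [this, hG, hA]
  ring

lemma shift_exp (m σ β w : ℝ) (hσ : 0 < σ) :
    Real.exp (β * w) * normalPDF m σ w
      = Real.exp (β * m + β ^ 2 * σ ^ 2 / 2) * normalPDF (m + β * σ ^ 2) σ w := by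
  unfold normalPDF
  rw [← mul_assoc, mul_comm (Real.exp (β * w)), mul_assoc, ← Real.exp_add,
      ← mul_assoc, mul_comm (Real.exp (β * m + β ^ 2 * σ ^ 2 / 2)), mul_assoc, ← Real.exp_add]
  congr 1
  have hσ2 : (2 : ℝ) * σ ^ 2 ≠ 0 := by positivity
  field_simp
  ring

set_option maxHeartbeats 2000000 in
theorem integral_matern25_mul_normalPDF (γ σ μ a μA μB e10 e11 e12 e20 e21 e22 : ℝ)
    (hγ : 0 < γ) (hσ : 0 < σ)
    (hμA : μA = μ - Real.sqrt 5 * σ ^ 2 / γ) (hμB : μB = μ + Real.sqrt 5 * σ ^ 2 / γ)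
    (he10 : e10 = 1 - Real.sqrt 5 * a / γ + 5 * a ^ 2 / (3 * γ ^ 2))
    (he11 : e11 = Real.sqrt 5 / γ - 10 * a / (3 * γ ^ 2))
    (he12 : e12 = 5 / (3 * γ ^ 2))
    (he20 : e20 = 1 + Real.sqrt 5 * a / γ + 5 * a ^ 2 / (3 * γ ^ 2))
    (he21 : e21 = Real.sqrt 5 / γ + 10 * a / (3 * γ ^ 2))
    (he22 : e22 = 5 / (3 * γ ^ 2)) :
    ∫ w : ℝ,
        (1 + Real.sqrt 5 * |w - a| / γ + 5 * (w - a) ^ 2 / (3 * γ ^ 2)) *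
          Real.exp (-(Real.sqrt 5) * |w - a| / γ) * normalPDF μ σ w =
      Real.exp ((5 * σ ^ 2 + 2 * Real.sqrt 5 * γ * (a - μ)) / (2 * γ ^ 2)) *
        ((e10 + e11 * μA + e12 * (μA ^ 2 + σ ^ 2)) * Phi ((μA - a) / σ) +
          (e11 + e12 * (μA + a)) * (σ / Real.sqrt (2 * Real.pi)) *
            Real.exp (-(a - μA) ^ 2 / (2 * σ ^ 2))) +
      Real.exp ((5 * σ ^ 2 - 2 * Real.sqrt 5 * γ * (a - μ)) / (2 * γ ^ 2)) *
        ((e20 - e21 * μB + e22 * (μB ^ 2 + σ ^ 2)) * Phi ((a - μB) / σ) +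
          (e21 + e22 * (-μB - a)) * (σ / Real.sqrt (2 * Real.pi)) *
            Real.exp (-(a - μB) ^ 2 / (2 * σ ^ 2))) := by
  have hγ' : γ ≠ 0 := hγ.ne'
  have hσ' : σ ≠ 0 := hσ.ne'
  have hc : (0:ℝ) < Real.sqrt (2 * Real.pi) := Real.sqrt_pos.2 (by positivity)
  have hs5 : (0:ℝ) < Real.sqrt 5 := Real.sqrt_pos.2 (by norm_num)
  obtain ⟨β, hβdef⟩ : ∃ β : ℝ, β = Real.sqrt 5 / γ := ⟨_, rfl⟩
  have hβ : 0 < β := hβdef ▸ div_pos hs5 hγ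
  -- integrability of the full integrand
  have hf_int : Integrable (fun w : ℝ =>
      (1 + Real.sqrt 5 * |w - a| / γ + 5 * (w - a) ^ 2 / (3 * γ ^ 2)) *
        Real.exp (-(Real.sqrt 5) * |w - a| / γ) * normalPDF μ σ w) := by
    set C : ℝ := β + 5 / (3 * γ ^ 2) with hCdef
    have hC : 0 < C := by positivity
    have hg_int : Integrable (fun w =>
        (((1 + β) + C * a ^ 2) + (-(2 * C * a)) * w + C * w ^ 2) * normalPDF μ σ w) :=
      integrable_poly μ σ hσ _ _ _
    apply Integrable.mono' hg_int
    · apply Continuous.aestronglyMeasurable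
      apply Continuous.mul _ (continuous_normalPDF μ σ)
      apply Continuous.mul
      · fun_prop
      · fun_prop
    · filter_upwards with w
      have hφ := normalPDF_nonneg μ σ w hσ
      have habs : |w - a| ≤ 1 + (w - a) ^ 2 := by
        nlinarith [sq_nonneg (|w - a| - 1), sq_abs (w - a), abs_nonneg (w - a)]
      have hM0 : 0 ≤ 1 + Real.sqrt 5 * |w - a| / γ + 5 * (w - a) ^ 2 / (3 * γ ^ 2) := by
        have := abs_nonneg (w - a)
        positivity
      have hexp1 : Real.exp (-(Real.sqrt 5) * |w - a| / γ) ≤ 1 := by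
        rw [← Real.exp_zero]
        apply Real.exp_le_exp.2
        apply div_nonpos_of_nonpos_of_nonneg _ hγ.le
        have := abs_nonneg (w - a)
        nlinarith
      have h1 : (1 + Real.sqrt 5 * |w - a| / γ + 5 * (w - a) ^ 2 / (3 * γ ^ 2)) *
          Real.exp (-(Real.sqrt 5) * |w - a| / γ) * normalPDF μ σ w
          ≤ (1 + Real.sqrt 5 * |w - a| / γ + 5 * (w - a) ^ 2 / (3 * γ ^ 2)) * normalPDF μ σ w := by
        have := mul_le_mul_of_nonneg_left hexp1 hM0
        have := mul_le_mul_of_nonneg_right this hφ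
        simpa using this
      have h2 : (1 + Real.sqrt 5 * |w - a| / γ + 5 * (w - a) ^ 2 / (3 * γ ^ 2))
          ≤ (1 + β) + C * (w - a) ^ 2 := by
        have hM : 1 + Real.sqrt 5 * |w - a| / γ + 5 * (w - a) ^ 2 / (3 * γ ^ 2)
            = 1 + β * |w - a| + (5 / (3 * γ ^ 2)) * (w - a) ^ 2 := by
          rw [hβdef]; ring
        rw [hM, hCdef]
        nlinarith [mul_le_mul_of_nonneg_left habs hβ.le]
      rw [Real.norm_eq_abs, abs_of_nonneg (mul_nonneg (mul_nonneg hM0 (Real.exp_pos _).le) hφ)]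
      refine h1.trans ?_
      have h3 := mul_le_mul_of_nonneg_right h2 hφ
      refine h3.trans (le_of_eq ?_)
      ring
  rw [← intervalIntegral.integral_Iic_add_Ioi (b := a) hf_int.integrableOn hf_int.integrableOn]
  -- the Iic part
  have hIic : (∫ w in Set.Iic a,
      (1 + Real.sqrt 5 * |w - a| / γ + 5 * (w - a) ^ 2 / (3 * γ ^ 2)) *
        Real.exp (-(Real.sqrt 5) * |w - a| / γ) * normalPDF μ σ w)
      = Real.exp ((5 * σ ^ 2 - 2 * Real.sqrt 5 * γ * (a - μ)) / (2 * γ ^ 2)) *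
        ∫ w in Set.Iic a, (e20 + (-e21) * w + e22 * w ^ 2) * normalPDF μB σ w := by
    rw [← integral_const_mul]
    apply setIntegral_congr_fun measurableSet_Iic
    intro w hw
    dsimp only
    have habs : |w - a| = -(w - a) := abs_of_nonpos (by simpa using hw)
    rw [habs]
    have hexp : Real.exp (-(Real.sqrt 5) * -(w - a) / γ) = Real.exp (-β * a) * Real.exp (β * w) := by
      rw [← Real.exp_add]; congr 1; rw [hβdef]; field_simp; ring
    rw [hexp]
    have hshift := shift_exp μ σ β w hσ
    have hmB : μ + β * σ ^ 2 = μB := by rw [hμB, hβdef]; ring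
    rw [hmB] at hshift
    have hstep : (1 + Real.sqrt 5 * -(w - a) / γ + 5 * (w - a) ^ 2 / (3 * γ ^ 2)) *
        (Real.exp (-β * a) * Real.exp (β * w)) * normalPDF μ σ w
        = (1 + Real.sqrt 5 * -(w - a) / γ + 5 * (w - a) ^ 2 / (3 * γ ^ 2)) *
          Real.exp (-β * a) * (Real.exp (β * w) * normalPDF μ σ w) := by ring
    rw [hstep, hshift]
    have hK : Real.exp ((5 * σ ^ 2 - 2 * Real.sqrt 5 * γ * (a - μ)) / (2 * γ ^ 2))
        = Real.exp (-β * a) * Real.exp (β * μ + β ^ 2 * σ ^ 2 / 2) := by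
      rw [← Real.exp_add]; congr 1; rw [hβdef]; field_simp; ring_nf; rw [Real.sq_sqrt (by norm_num : (0:ℝ) ≤ 5)]
    have hpoly : (1 + Real.sqrt 5 * -(w - a) / γ + 5 * (w - a) ^ 2 / (3 * γ ^ 2))
        = e20 + (-e21) * w + e22 * w ^ 2 := by
      rw [he20, he21, he22]; field_simp; ring
    rw [hpoly, hK]
    ring
  -- the Ioi part
  have hIoi : (∫ w in Set.Ioi a,
      (1 + Real.sqrt 5 * |w - a| / γ + 5 * (w - a) ^ 2 / (3 * γ ^ 2)) *
        Real.exp (-(Real.sqrt 5) * |w - a| / γ) * normalPDF μ σ w)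
      = Real.exp ((5 * σ ^ 2 + 2 * Real.sqrt 5 * γ * (a - μ)) / (2 * γ ^ 2)) *
        ∫ w in Set.Ioi a, (e10 + e11 * w + e12 * w ^ 2) * normalPDF μA σ w := by
    rw [← integral_const_mul]
    apply setIntegral_congr_fun measurableSet_Ioi
    intro w hw
    dsimp only
    have habs : |w - a| = w - a := abs_of_nonneg (by simp only [Set.mem_Ioi] at hw; linarith)
    rw [habs]
    have hexp : Real.exp (-(Real.sqrt 5) * (w - a) / γ) = Real.exp (β * a) * Real.exp (-β * w) := by
      rw [← Real.exp_add]; congr 1; rw [hβdef]; field_simp; ring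
    rw [hexp]
    have hshift := shift_exp μ σ (-β) w hσ
    have hmA : μ + -β * σ ^ 2 = μA := by rw [hμA, hβdef]; ring
    rw [hmA] at hshift
    have hstep : (1 + Real.sqrt 5 * (w - a) / γ + 5 * (w - a) ^ 2 / (3 * γ ^ 2)) *
        (Real.exp (β * a) * Real.exp (-β * w)) * normalPDF μ σ w
        = (1 + Real.sqrt 5 * (w - a) / γ + 5 * (w - a) ^ 2 / (3 * γ ^ 2)) *
          Real.exp (β * a) * (Real.exp (-β * w) * normalPDF μ σ w) := by ring
    rw [hstep, hshift]
    have hK : Real.exp ((5 * σ ^ 2 + 2 * Real.sqrt 5 * γ * (a - μ)) / (2 * γ ^ 2))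
        = Real.exp (β * a) * Real.exp (-β * μ + (-β) ^ 2 * σ ^ 2 / 2) := by
      rw [← Real.exp_add]; congr 1; rw [hβdef]; field_simp; ring_nf; rw [Real.sq_sqrt (by norm_num : (0:ℝ) ≤ 5)]
    have hpoly : (1 + Real.sqrt 5 * (w - a) / γ + 5 * (w - a) ^ 2 / (3 * γ ^ 2))
        = e10 + e11 * w + e12 * w ^ 2 := by
      rw [he10, he11, he12]; field_simp; ring
    rw [hpoly, hK]
    ring
  rw [hIic, hIoi, key_Iic μB σ hσ e20 (-e21) e22 a, key_Ioi μA σ hσ e10 e11 e12 a]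
  have hden : ∀ m : ℝ, σ ^ 2 * normalPDF m σ a
      = σ / Real.sqrt (2 * Real.pi) * Real.exp (-(a - m) ^ 2 / (2 * σ ^ 2)) := by
    intro m
    unfold normalPDF
    rw [← mul_assoc]
    congr 1
    field_simp
  rw [hden, hden]
  ring
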